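/- arXiv:0909.4129 — 3 statements merged into one kernel-verified Lean document; each statement's English description precedes it below -/
import Mathlib

section
/- For all real numbers δ > 0 and c > 0, let d₁ = δ⁻¹·log(1+δc) and d₂ = e^{-c}/(1+δc). Then the acceptance rate R_B(δ; c) = (∫₀^∞ e^{-x}(1+δx)^{-1} dx) / (d₁ + d₂) satisfies R_B(δ; c) ≥ (e^c + c⁻¹)^{-1}. -/
open MeasureTheory Real

theorem acceptance_rate_lower_bound (δ c : ℝ) (hδ : 0 < δ) (hc : 0 < c) :
    (∫ x in Set.Ioi (0:ℝ), Real.exp (-x) * (1 + δ * x)⁻¹) /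
      (δ⁻¹ * Real.log (1 + δ * c) + Real.exp (-c) / (1 + δ * c)) ≥
    (Real.exp c + c⁻¹)⁻¹ := by
  set f : ℝ → ℝ := fun x => Real.exp (-x) * (1 + δ * x)⁻¹ with hf
  have h1δc : (0:ℝ) < 1 + δ * c := by positivity
  have hlog : 0 < Real.log (1 + δ * c) := Real.log_pos (by nlinarith)
  have hd1 : 0 < δ⁻¹ * Real.log (1 + δ * c) := by positivity
  have hd2 : 0 < Real.exp (-c) / (1 + δ * c) := by positivity
  have hD : 0 < δ⁻¹ * Real.log (1 + δ * c) + Real.exp (-c) / (1 + δ * c) := by linarith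
  have hE : 0 < Real.exp c + c⁻¹ := by positivity
  -- integrability of f on Ioi 0
  have hmeas : Measurable f := by
    exact (Real.measurable_exp.comp measurable_neg).mul
      (measurable_const.add (measurable_const.mul measurable_id)).inv
  have hint : IntegrableOn f (Set.Ioi (0:ℝ)) := by
    have hexp : IntegrableOn (fun x => Real.exp (-1 * x)) (Set.Ioi (0:ℝ)) :=
      exp_neg_integrableOn_Ioi 0 one_pos
    refine Integrable.mono' hexp hmeas.aestronglyMeasurable ?_
    filter_upwards [ae_restrict_mem measurableSet_Ioi] with x hx
    have hx0 : (0:ℝ) < x := hx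
    have h1 : (1:ℝ) ≤ 1 + δ * x := by nlinarith
    have h2 : (1 + δ * x)⁻¹ ≤ 1 := by
      rw [inv_le_one_iff₀]; right; exact h1
    have h3 : 0 ≤ (1 + δ * x)⁻¹ := by positivity
    rw [Real.norm_eq_abs, abs_of_nonneg (by positivity)]
    show Real.exp (-x) * (1 + δ * x)⁻¹ ≤ _
    calc Real.exp (-x) * (1 + δ * x)⁻¹ ≤ Real.exp (-x) * 1 := by
          exact mul_le_mul_of_nonneg_left h2 (Real.exp_pos _).le
      _ = Real.exp (-1 * x) := by ring_nf
  -- integral over Ioc 0 c ≤ integral over Ioi 0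
  have hsub : Set.Ioc (0:ℝ) c ⊆ Set.Ioi 0 := Set.Ioc_subset_Ioi_self
  have hintc : IntegrableOn f (Set.Ioc (0:ℝ) c) := hint.mono_set hsub
  have hmono : ∫ x in Set.Ioc (0:ℝ) c, f x ≤ ∫ x in Set.Ioi (0:ℝ), f x := by
    apply setIntegral_mono_set hint ?_ (HasSubset.Subset.eventuallyLE hsub)
    filter_upwards [ae_restrict_mem measurableSet_Ioi] with x hx
    have hx0 : (0:ℝ) < x := hx
    positivity
  -- bound 1: ∫_{Ioc 0 c} f ≥ e^{-c} * d₁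
  have hanti : ∫ x in (0:ℝ)..c, (1 + δ * x)⁻¹ = δ⁻¹ * Real.log (1 + δ * c) := by
    have : ∀ x ∈ Set.uIcc (0:ℝ) c, HasDerivAt (fun y => δ⁻¹ * Real.log (1 + δ * y))
        ((1 + δ * x)⁻¹) x := by
      intro x hx
      rw [Set.uIcc_of_le hc.le] at hx
      have hx0 : 0 ≤ x := hx.1
      have hpos : (0:ℝ) < 1 + δ * x := by positivity
      have h1 : HasDerivAt (fun y => 1 + δ * y) δ x := by
        simpa using ((hasDerivAt_id x).const_mul δ).const_add 1
      have h2 := (h1.log hpos.ne').const_mul δ⁻¹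
      refine h2.congr_deriv ?_
      rw [← mul_div_assoc, inv_mul_cancel₀ hδ.ne', one_div]
    rw [intervalIntegral.integral_eq_sub_of_hasDerivAt this]
    · simp
    · apply ContinuousOn.intervalIntegrable
      intro x hx
      rw [Set.uIcc_of_le hc.le] at hx
      have hpos : (0:ℝ) < 1 + δ * x := by nlinarith [hx.1]
      exact (continuousAt_const.add (continuousAt_const.mul continuousAt_id)).continuousWithinAt.inv₀ hpos.ne'
  have hb1 : Real.exp (-c) * (δ⁻¹ * Real.log (1 + δ * c)) ≤ ∫ x in Set.Ioc (0:ℝ) c, f x := by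
    have : ∫ x in Set.Ioc (0:ℝ) c, Real.exp (-c) * (1 + δ * x)⁻¹ ≤ ∫ x in Set.Ioc (0:ℝ) c, f x := by
      apply setIntegral_mono_on ?_ hintc measurableSet_Ioc
      · intro x hx
        have h2 : (0:ℝ) ≤ (1 + δ * x)⁻¹ := by
          have : (0:ℝ) < 1 + δ * x := by nlinarith [hx.1]
          positivity
        exact mul_le_mul_of_nonneg_right (Real.exp_le_exp.2 (by linarith [hx.2])) h2
      · have hcont : IntegrableOn (fun x => (1 + δ * x)⁻¹) (Set.Icc (0:ℝ) c) := by
          apply ContinuousOn.integrableOn_compact isCompact_Icc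
          intro x hx
          have hpos : (0:ℝ) < 1 + δ * x := by nlinarith [hx.1]
          exact (continuousAt_const.add (continuousAt_const.mul continuousAt_id)).continuousWithinAt.inv₀ hpos.ne'
        exact (hcont.mono_set Set.Ioc_subset_Icc_self).const_mul _
    calc Real.exp (-c) * (δ⁻¹ * Real.log (1 + δ * c))
        = ∫ x in Set.Ioc (0:ℝ) c, Real.exp (-c) * (1 + δ * x)⁻¹ := by
          rw [MeasureTheory.integral_const_mul, ← intervalIntegral.integral_of_le hc.le, hanti]
      _ ≤ _ := this
  -- bound 2: ∫_{Ioc 0 c} f ≥ c * e^{-c}/(1+δc)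
  have hb2 : c * (Real.exp (-c) / (1 + δ * c)) ≤ ∫ x in Set.Ioc (0:ℝ) c, f x := by
    have : ∫ _ in Set.Ioc (0:ℝ) c, (Real.exp (-c) / (1 + δ * c)) ≤ ∫ x in Set.Ioc (0:ℝ) c, f x := by
      apply setIntegral_mono_on (integrableOn_const measure_Ioc_lt_top.ne) hintc measurableSet_Ioc
      intro x hx
      have hpos : (0:ℝ) < 1 + δ * x := by nlinarith [hx.1]
      have h1 : Real.exp (-c) ≤ Real.exp (-x) := Real.exp_le_exp.2 (by linarith [hx.2])
      have h2 : (1 + δ * c)⁻¹ ≤ (1 + δ * x)⁻¹ := by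
        apply inv_anti₀ hpos
        nlinarith [hx.2]
      calc Real.exp (-c) / (1 + δ * c) = Real.exp (-c) * (1 + δ * c)⁻¹ := div_eq_mul_inv _ _
        _ ≤ Real.exp (-x) * (1 + δ * x)⁻¹ :=
            mul_le_mul h1 h2 (by positivity) (Real.exp_pos _).le
    calc c * (Real.exp (-c) / (1 + δ * c))
        = ∫ _ in Set.Ioc (0:ℝ) c, (Real.exp (-c) / (1 + δ * c)) := by
          rw [setIntegral_const, Real.volume_real_Ioc_of_le hc.le, smul_eq_mul]
          ring
      _ ≤ _ := this
  -- combine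
  have hI1 : Real.exp (-c) * (δ⁻¹ * Real.log (1 + δ * c)) ≤ ∫ x in Set.Ioi (0:ℝ), f x :=
    hb1.trans hmono
  have hI2 : c * (Real.exp (-c) / (1 + δ * c)) ≤ ∫ x in Set.Ioi (0:ℝ), f x := hb2.trans hmono
  set I := ∫ x in Set.Ioi (0:ℝ), f x with hIdef
  have hIpos : 0 < I := lt_of_lt_of_le (by positivity) hI2
  rw [ge_iff_le, inv_le_iff_one_le_mul₀ hE, ← div_le_iff₀ hE] at *
  rw [div_le_div_iff₀ hE (by positivity)]
  have key : (δ⁻¹ * Real.log (1 + δ * c) + Real.exp (-c) / (1 + δ * c)) * 1 ≤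
      I * (Real.exp c + c⁻¹) := by
    have e1 : Real.exp (-c) * Real.exp c = 1 := by
      rw [← Real.exp_add]; simp
    have t1 : δ⁻¹ * Real.log (1 + δ * c) ≤ I * Real.exp c := by
      calc δ⁻¹ * Real.log (1 + δ * c)
          = Real.exp (-c) * (δ⁻¹ * Real.log (1 + δ * c)) * Real.exp c := by
            rw [mul_comm (Real.exp (-c)) _, mul_assoc, e1, mul_one]
        _ ≤ I * Real.exp c := mul_le_mul_of_nonneg_right hI1 (Real.exp_pos _).le
    have t2 : Real.exp (-c) / (1 + δ * c) ≤ I * c⁻¹ := by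
      calc Real.exp (-c) / (1 + δ * c)
          = c * (Real.exp (-c) / (1 + δ * c)) * c⁻¹ := by
            field_simp
        _ ≤ I * c⁻¹ := mul_le_mul_of_nonneg_right hI2 (by positivity)
    nlinarith [t1, t2]
  linarith [key]
end

section
/- For all real numbers δ > 0 and c > 0, ∫₀^∞ e^{-x}(1+δx)^{-1} dx ≥ e^{-c}·δ⁻¹·log(1+δc). -/
open MeasureTheory Real

theorem integral_lower_bound (δ c : ℝ) (hδ : 0 < δ) (hc : 0 < c) :
    ∫ x in Set.Ioi (0:ℝ), Real.exp (-x) * (1 + δ * x)⁻¹ ≥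
      Real.exp (-c) * δ⁻¹ * Real.log (1 + δ * c) := by
  have hpos : ∀ x : ℝ, 0 ≤ x → 0 < 1 + δ * x := fun x hx => by positivity
  -- integrability on Ioi 0
  have hint : IntegrableOn (fun x => Real.exp (-x) * (1 + δ * x)⁻¹) (Set.Ioi (0:ℝ)) := by
    apply Integrable.mono (exp_neg_integrableOn_Ioi 0 one_pos)
    · apply Measurable.aestronglyMeasurable
      exact (measurable_neg.exp).mul ((measurable_const.add (measurable_id.const_mul δ)).inv)
    · filter_upwards [ae_restrict_mem measurableSet_Ioi] with x hx
      simp only [Set.mem_Ioi] at hx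
      have h1 : 0 < 1 + δ * x := hpos x hx.le
      rw [Real.norm_eq_abs, Real.norm_eq_abs, abs_of_pos (by positivity),
        abs_of_pos (Real.exp_pos _)]
      calc Real.exp (-x) * (1 + δ * x)⁻¹ ≤ Real.exp (-x) * 1 := by
            apply mul_le_mul_of_nonneg_left _ (Real.exp_pos _).le
            rw [inv_le_one_iff₀]; right; nlinarith [mul_pos hδ hx]
        _ = Real.exp (-1 * x) := by rw [mul_one]; ring_nf
  -- the FTC piece
  have hftc : ∫ x in (0:ℝ)..c, (1 + δ * x)⁻¹ = δ⁻¹ * Real.log (1 + δ * c) := by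
    have : ∫ x in (0:ℝ)..c, (1 + δ * x)⁻¹
        = δ⁻¹ * Real.log (1 + δ * c) - δ⁻¹ * Real.log (1 + δ * 0) := by
      apply intervalIntegral.integral_eq_sub_of_hasDerivAt
      · intro x hx
        rw [Set.uIcc_of_le hc.le] at hx
        have h1 : 0 < 1 + δ * x := hpos x hx.1
        have := ((hasDerivAt_const x (1:ℝ)).add ((hasDerivAt_id x).const_mul δ)).log h1.ne'
        have h2 := this.const_mul δ⁻¹
        convert h2 using 1
        · rfl
        · rfl
        have hδ0 : δ ≠ 0 := hδ.ne'
        simp only [Pi.add_apply, id, zero_add, mul_one]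
        field_simp
      · apply ContinuousOn.intervalIntegrable
        apply ContinuousOn.inv₀
          ((continuous_const.add (continuous_const.mul continuous_id)).continuousOn)
        intro x hx
        rw [Set.uIcc_of_le hc.le] at hx
        exact (hpos x hx.1).ne'
    simp [this]
  calc ∫ x in Set.Ioi (0:ℝ), Real.exp (-x) * (1 + δ * x)⁻¹
      ≥ ∫ x in Set.Ioc (0:ℝ) c, Real.exp (-x) * (1 + δ * x)⁻¹ := by
        apply setIntegral_mono_set hint
        · filter_upwards [ae_restrict_mem measurableSet_Ioi] with x hx
          have h1 : 0 < 1 + δ * x := hpos x (le_of_lt hx)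
          positivity
        · exact HasSubset.Subset.eventuallyLE Set.Ioc_subset_Ioi_self
    _ ≥ ∫ x in Set.Ioc (0:ℝ) c, Real.exp (-c) * (1 + δ * x)⁻¹ := by
        apply setIntegral_mono_on
        · apply Integrable.const_mul
          have hcont : ContinuousOn (fun x : ℝ => (1 + δ * x)⁻¹) (Set.Icc 0 c) := by
            apply ContinuousOn.inv₀
              ((continuous_const.add (continuous_const.mul continuous_id)).continuousOn)
            intro x hx
            exact (hpos x hx.1).ne'
          exact (hcont.integrableOn_Icc).mono_set Set.Ioc_subset_Icc_self
        · exact hint.mono_set Set.Ioc_subset_Ioi_self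
        · exact measurableSet_Ioc
        · intro x hx
          have h1 : 0 < 1 + δ * x := hpos x hx.1.le
          apply mul_le_mul_of_nonneg_right _ (by positivity)
          exact Real.exp_le_exp.2 (by linarith [hx.2])
    _ = Real.exp (-c) * δ⁻¹ * Real.log (1 + δ * c) := by
        rw [MeasureTheory.integral_const_mul, ← intervalIntegral.integral_of_le hc.le, hftc]
        ring
end

section
/- For all real β > 0, γ > 0, δ ≥ 0, the double integral of f(x,y) = exp(−(βx + γy + δβγxy)) over (0,∞)² equals (βγ)^{-1} · ∫₀^∞ e^{-x}(1+δx)^{-1} dx. Consequently, since ∫₀^∞∫₀^∞ exp(−βx−γy) dx dy = (βγ)^{-1}, the acceptance rate of Algorithm A equals R_A(δ) = ∫₀^∞ e^{-x}(1+δx)^{-1} dx. -/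
open MeasureTheory

lemma exp_neg_mul_integral {c : ℝ} (hc : 0 < c) :
    (∫ y in Set.Ioi (0:ℝ), Real.exp (-(c * y))) = c⁻¹ := by
  have := integral_comp_mul_left_Ioi (fun u => Real.exp (-u)) 0 hc
  simp only [mul_zero] at this
  rw [this, integral_exp_neg_Ioi_zero, smul_eq_mul, mul_one]

theorem double_integral_and_acceptance_rate (β γ δ : ℝ) (hβ : 0 < β) (hγ : 0 < γ)
    (hδ : 0 ≤ δ) :
    (∫ x in Set.Ioi (0:ℝ), ∫ y in Set.Ioi (0:ℝ),
        Real.exp (-(β * x + γ * y + δ * β * γ * x * y))) =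
        (β * γ)⁻¹ * ∫ x in Set.Ioi (0:ℝ), Real.exp (-x) * (1 + δ * x)⁻¹ ∧
      (∫ x in Set.Ioi (0:ℝ), ∫ y in Set.Ioi (0:ℝ), Real.exp (-β * x - γ * y)) =
        (β * γ)⁻¹ ∧
      (∫ x in Set.Ioi (0:ℝ), ∫ y in Set.Ioi (0:ℝ),
          Real.exp (-(β * x + γ * y + δ * β * γ * x * y))) /
        (∫ x in Set.Ioi (0:ℝ), ∫ y in Set.Ioi (0:ℝ), Real.exp (-β * x - γ * y)) =
        ∫ x in Set.Ioi (0:ℝ), Real.exp (-x) * (1 + δ * x)⁻¹ := by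
  have h1 : (∫ x in Set.Ioi (0:ℝ), ∫ y in Set.Ioi (0:ℝ),
        Real.exp (-(β * x + γ * y + δ * β * γ * x * y))) =
        (β * γ)⁻¹ * ∫ x in Set.Ioi (0:ℝ), Real.exp (-x) * (1 + δ * x)⁻¹ := by
    have step1 : (∫ x in Set.Ioi (0:ℝ), ∫ y in Set.Ioi (0:ℝ),
        Real.exp (-(β * x + γ * y + δ * β * γ * x * y))) =
        ∫ x in Set.Ioi (0:ℝ),
          Real.exp (-(β * x)) * (γ * (1 + δ * (β * x)))⁻¹ := by
      apply setIntegral_congr_fun measurableSet_Ioi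
      intro x hx
      have hx' : (0:ℝ) < x := hx
      have hc : 0 < γ * (1 + δ * (β * x)) := by positivity
      have : (fun y => Real.exp (-(β * x + γ * y + δ * β * γ * x * y))) =
          fun y => Real.exp (-(β * x)) * Real.exp (-((γ * (1 + δ * (β * x))) * y)) := by
        funext y
        rw [← Real.exp_add]
        ring_nf
      dsimp only
      rw [this, integral_const_mul, exp_neg_mul_integral hc]
    rw [step1]
    have step2 := integral_comp_mul_left_Ioi
      (fun u => Real.exp (-u) * (γ * (1 + δ * u))⁻¹) 0 hβ
    simp only [mul_zero] at step2
    rw [step2, smul_eq_mul]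
    have : (∫ u in Set.Ioi (0:ℝ), Real.exp (-u) * (γ * (1 + δ * u))⁻¹) =
        γ⁻¹ * ∫ u in Set.Ioi (0:ℝ), Real.exp (-u) * (1 + δ * u)⁻¹ := by
      rw [← integral_const_mul]
      congr 1
      funext u
      rw [mul_inv]
      ring
    rw [this, mul_inv]
    ring
  have h2 : (∫ x in Set.Ioi (0:ℝ), ∫ y in Set.Ioi (0:ℝ),
      Real.exp (-β * x - γ * y)) = (β * γ)⁻¹ := by
    have step1 : (∫ x in Set.Ioi (0:ℝ), ∫ y in Set.Ioi (0:ℝ),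
        Real.exp (-β * x - γ * y)) =
        ∫ x in Set.Ioi (0:ℝ), Real.exp (-(β * x)) * γ⁻¹ := by
      apply setIntegral_congr_fun measurableSet_Ioi
      intro x _
      have : (fun y => Real.exp (-β * x - γ * y)) =
          fun y => Real.exp (-(β * x)) * Real.exp (-(γ * y)) := by
        funext y
        rw [← Real.exp_add]
        ring_nf
      dsimp only
      rw [this, integral_const_mul, exp_neg_mul_integral hγ]
    rw [step1, integral_mul_const, exp_neg_mul_integral hβ, mul_inv]
  refine ⟨h1, h2, ?_⟩
  rw [h1, h2]
  have hne : ((β * γ)⁻¹ : ℝ) ≠ 0 := by positivity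
  field_simp
  congr 1
  funext x
  ring
end
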